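/- (Correctness of the reduction in Proposition 1.) Let G = (V, E) be a finite undirected simple graph with V nonempty and let k ≥ 1 be an integer. Form the graph G' on node set V' = V ∪ {u_1, …, u_k}, where u_1, …, u_k are k new isolated nodes, with the same edge set E. Set c_v = 0 for every v ∈ V, c_{u_i} = 1 for i = 1, …, k, and θ = 1/2. Then for every real number val ≥ 0: there exists a nonempty subset S ⊆ V with |S| ≤ k and |E(S)|/|S| ≥ val if and only if there exists a nonempty subset S' ⊆ V' with c(S') ≥ 1/2 and d(S') ≥ val/2. -/

import Mathlib

/-- The number of edges of `G` with both endpoints in `S`, divided by `|S|`. -/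
noncomputable def density {V : Type*} (G : SimpleGraph V) (S : Finset V) : ℝ :=
  ({e ∈ G.edgeSet | ∀ v ∈ e, v ∈ S} : Set (Sym2 V)).ncard / S.card

/-- The average agreement value over `S`. -/
noncomputable def agreement {V : Type*} (c : V → ℝ) (S : Finset V) : ℝ :=
  (∑ v ∈ S, c v) / S.card

lemma edge_set_image {V : Type*} {k : ℕ} (G : SimpleGraph V) (S' : Finset (V ⊕ Fin k)) :
    ({e ∈ (G.map Sum.inl).edgeSet | ∀ v ∈ e, v ∈ S'} : Set (Sym2 (V ⊕ Fin k)))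
      = Sym2.map Sum.inl '' {e ∈ G.edgeSet | ∀ v ∈ e, Sum.inl v ∈ S'} := by
  ext e'
  constructor
  · rintro ⟨he, hmem⟩
    induction e' using Sym2.inductionOn with
    | hf x y =>
      rw [SimpleGraph.mem_edgeSet] at he; replace he := (SimpleGraph.map_adj ⟨Sum.inl, Sum.inl_injective⟩ G x y).mp he
      obtain ⟨a, b, hab, hax, hby⟩ := he
      have hax' : Sum.inl a = x := hax
      have hby' : Sum.inl b = y := hby
      subst hax'; subst hby'
      refine ⟨s(a, b), ⟨hab, ?_⟩, by rw [Sym2.map_pair_eq]⟩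
      intro v hv
      rcases Sym2.mem_iff.mp hv with rfl | rfl
      · exact hmem _ (by simp)
      · exact hmem _ (by simp)
  · rintro ⟨e, ⟨he, hmem⟩, rfl⟩
    refine ⟨?_, ?_⟩
    · induction e using Sym2.inductionOn with
      | hf x y =>
        rw [Sym2.map_pair_eq, SimpleGraph.mem_edgeSet]; refine (SimpleGraph.map_adj ⟨Sum.inl, Sum.inl_injective⟩ G _ _).mpr ?_
        exact ⟨x, y, he, rfl, rfl⟩
    · intro v hv
      rcases Sym2.mem_map.mp hv with ⟨a, ha, rfl⟩
      exact hmem a ha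

/-- The count of in-`S'` edges of the mapped graph equals the count of edges of `G` whose
endpoints map into `S'`. -/
lemma edge_ncard_eq {V : Type*} {k : ℕ} (G : SimpleGraph V) (S' : Finset (V ⊕ Fin k)) :
    ({e ∈ (G.map Sum.inl).edgeSet | ∀ v ∈ e, v ∈ S'} :
        Set (Sym2 (V ⊕ Fin k))).ncard
      = ({e ∈ G.edgeSet | ∀ v ∈ e, Sum.inl v ∈ S'} : Set (Sym2 V)).ncard := by
  rw [edge_set_image]
  exact Set.ncard_image_of_injective _ (Sym2.map.injective Sum.inl_injective)

/-- Correctness of the reduction from Densest at-most-k-Subgraph to Q-DISCO: extend `G` by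
`k` isolated nodes of agreement `1`, give original nodes agreement `0`, and set `θ = 1/2`.
Then `G` has a nonempty subset of size at most `k` and density at least `val` iff the
extended instance has a nonempty feasible subset of density at least `val/2`. -/
theorem damks_reduction_correct {V : Type*} [Fintype V] [Nonempty V]
    (G : SimpleGraph V) (k : ℕ) (hk : 1 ≤ k)
    (c' : V ⊕ Fin k → ℝ)
    (hc'V : ∀ v : V, c' (Sum.inl v) = 0) (hc'new : ∀ i : Fin k, c' (Sum.inr i) = 1)
    (val : ℝ) (hval : 0 ≤ val) :
    (∃ S : Finset V, S.Nonempty ∧ S.card ≤ k ∧ val ≤ density G S) ↔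
    (∃ S' : Finset (V ⊕ Fin k), S'.Nonempty ∧ (1 / 2 : ℝ) ≤ agreement c' S' ∧
      val / 2 ≤ density (G.map Sum.inl) S') := by
  classical
  haveI : DecidableEq (V ⊕ Fin k) := Classical.decEq _
  constructor
  · rintro ⟨S, hS, hSk, hd⟩
    obtain ⟨T, -, hT⟩ := Finset.exists_subset_card_eq
      (show S.card ≤ (Finset.univ : Finset (Fin k)).card by simpa using hSk)
    set S' : Finset (V ⊕ Fin k) := S.image Sum.inl ∪ T.image Sum.inr with hS'def
    have hdisj : Disjoint (S.image Sum.inl) (T.image Sum.inr) := by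
      simp [Finset.disjoint_left]
    have hcard : S'.card = 2 * S.card := by
      rw [hS'def, Finset.card_union_of_disjoint hdisj,
        Finset.card_image_of_injective _ Sum.inl_injective,
        Finset.card_image_of_injective _ Sum.inr_injective, hT]
      ring
    have hpos : (0 : ℝ) < S.card := by
      exact_mod_cast Finset.card_pos.mpr hS
    refine ⟨S', Finset.Nonempty.mono Finset.subset_union_left (hS.image _), ?_, ?_⟩
    · unfold agreement
      rw [hS'def, Finset.sum_union hdisj,
        Finset.sum_image (fun _ _ _ _ h => Sum.inl_injective h),
        Finset.sum_image (fun _ _ _ _ h => Sum.inr_injective h)]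
      simp only [hc'V, hc'new, Finset.sum_const_zero, Finset.sum_const, nsmul_eq_mul, mul_one,
        zero_add, hT]
      rw [← hS'def, hcard]
      rw [le_div_iff₀ (by positivity)]
      push_cast
      ring_nf
      rfl
    · unfold density
      rw [edge_ncard_eq]
      have hset : ({e ∈ G.edgeSet | ∀ v ∈ e, Sum.inl v ∈ S'} :
          Set (Sym2 V)) = {e ∈ G.edgeSet | ∀ v ∈ e, v ∈ S} := by
        ext e; simp [hS'def, Sum.inl_injective.eq_iff]
      rw [hset, hcard]
      unfold density at hd
      rw [div_le_div_iff₀ two_pos (by push_cast; positivity)]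
      rw [le_div_iff₀ hpos] at hd
      push_cast
      nlinarith [hd]
  · rintro ⟨S', hS', hagree, hdens⟩
    set S : Finset V := Finset.univ.filter (fun v => Sum.inl v ∈ S') with hSdef
    set TR : Finset (V ⊕ Fin k) := S'.filter (fun x => x.isRight) with hTRdef
    have hsplit : (S'.filter (fun x => x.isLeft)).card + TR.card = S'.card := by
      have heq : S'.filter (fun x => x.isRight) = S'.filter (fun x => ¬ x.isLeft = true) := by
        apply Finset.filter_congr
        intro x _; cases x <;> simp
      rw [hTRdef, heq, Finset.card_filter_add_card_filter_not]
    have hLcard : (S'.filter (fun x => x.isLeft)).card = S.card := by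
      rw [← Finset.card_image_of_injective (f := (Sum.inl : V → V ⊕ Fin k)) S Sum.inl_injective]
      congr 1
      ext x
      cases x with
      | inl v => simp [hSdef]
      | inr i => simp
    have hTRk : TR.card ≤ k := by
      have : TR ⊆ Finset.univ.image Sum.inr := by
        intro x hx
        rw [hTRdef, Finset.mem_filter] at hx
        cases x with
        | inl v => simp at hx
        | inr i => simp
      calc TR.card ≤ (Finset.univ.image (Sum.inr : Fin k → V ⊕ Fin k)).card :=
            Finset.card_le_card this
        _ ≤ k := by
            rw [Finset.card_image_of_injective _ Sum.inr_injective]; simp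
    have hsum : (∑ v ∈ S', c' v) = TR.card := by
      rw [hTRdef]
      rw [← Finset.sum_filter_add_sum_filter_not S' (fun x => x.isRight)]
      have h1 : ∑ v ∈ S'.filter (fun x => x.isRight), c' v
          = ∑ v ∈ S'.filter (fun x => x.isRight), (1 : ℝ) := by
        apply Finset.sum_congr rfl
        intro x hx
        rw [Finset.mem_filter] at hx
        cases x with
        | inl v => simp at hx
        | inr i => exact hc'new i
      have h2 : ∑ v ∈ S'.filter (fun x => ¬ x.isRight), c' v = 0 := by
        apply Finset.sum_eq_zero
        intro x hx
        rw [Finset.mem_filter] at hx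
        cases x with
        | inl v => exact hc'V v
        | inr i => simp at hx
      rw [h1, h2]
      simp
    have hS'pos : (0 : ℝ) < S'.card := by
      exact_mod_cast Finset.card_pos.mpr hS'
    -- from agreement: S.card ≤ TR.card
    have hagree' : (S.card : ℝ) ≤ TR.card := by
      unfold agreement at hagree
      rw [hsum, le_div_iff₀ hS'pos] at hagree
      have : (S'.card : ℝ) = S.card + TR.card := by
        rw [← hsplit, hLcard]; push_cast; ring
      nlinarith [hagree, this]
    have hdens' : val / 2 ≤
        (({e ∈ G.edgeSet | ∀ v ∈ e, v ∈ S} : Set (Sym2 V)).ncard : ℝ) / S'.card := by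
      unfold density at hdens
      rw [edge_ncard_eq] at hdens
      have hset : ({e ∈ G.edgeSet | ∀ v ∈ e, Sum.inl v ∈ S'} : Set (Sym2 V))
          = {e ∈ G.edgeSet | ∀ v ∈ e, v ∈ S} := by
        ext e; simp [hSdef]
      rwa [hset] at hdens
    by_cases hSne : S.Nonempty
    · refine ⟨S, hSne, ?_, ?_⟩
      · have : (S.card : ℝ) ≤ k := le_trans hagree' (by exact_mod_cast hTRk)
        exact_mod_cast this
      · have hpos : (0 : ℝ) < S.card := by exact_mod_cast Finset.card_pos.mpr hSne
        have hS'ge : (2 : ℝ) * S.card ≤ S'.card := by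
          have : (S'.card : ℝ) = S.card + TR.card := by
            rw [← hsplit, hLcard]; push_cast; ring
          linarith
        unfold density
        rw [le_div_iff₀ hpos]
        rw [div_le_div_iff₀ two_pos hS'pos] at hdens'
        have hnn : (0 : ℝ) ≤ (({e ∈ G.edgeSet | ∀ v ∈ e, v ∈ S} : Set (Sym2 V)).ncard : ℝ) := by
          positivity
        nlinarith [hdens', hS'ge, hnn]
    · -- S empty: no edges inside S', so val = 0; any singleton works
      have hSempty : S = ∅ := Finset.not_nonempty_iff_eq_empty.mp hSne
      have hzero : ({e ∈ G.edgeSet | ∀ v ∈ e, v ∈ S} : Set (Sym2 V)) = ∅ := by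
        ext e
        simp only [Set.mem_setOf_eq, Set.mem_empty_iff_false, iff_false, not_and, not_forall]
        intro he
        induction e using Sym2.inductionOn with
        | hf x y => exact ⟨x, by simp, by simp [hSempty]⟩
      rw [hzero] at hdens'
      simp only [Set.ncard_empty, Nat.cast_zero, zero_div] at hdens'
      have hval0 : val = 0 := le_antisymm (by linarith) hval
      obtain ⟨v0⟩ := ‹Nonempty V›
      refine ⟨{v0}, Finset.singleton_nonempty v0, by simpa using hk, ?_⟩
      rw [hval0]
      unfold density
      positivity
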